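/- If f: D → H is C^1 on a domain D ⊆ H^n and f is left regular (∂̄_{q_l} f = 0 for all l), then for any quaternionic matrix a ∈ GL(n, H) the pull-back f̂(q) = f(a q) satisfies ∂̄_{q_j} f̂(q) = Σ_k ā_{kj} (∂̄_{Q_k} f)(a q); in particular f̂ is left regular on a^{-1}D. -/

import Mathlib

open Quaternion Finset

/-- The quaternion unit `i`. -/
noncomputable def qi : ℍ[ℝ] := ⟨0, 1, 0, 0⟩
/-- The quaternion unit `j`. -/
noncomputable def qj : ℍ[ℝ] := ⟨0, 0, 1, 0⟩
/-- The quaternion unit `k`. -/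
noncomputable def qk : ℍ[ℝ] := ⟨0, 0, 0, 1⟩

/-- The Cauchy-Fueter operator `∂̄_{q_l}` in the `l`-th quaternionic variable:
`∂̄_{q_l} f = ∂_{x_{4l-3}} f + i ∂_{x_{4l-2}} f + j ∂_{x_{4l-1}} f + k ∂_{x_{4l}} f`,
expressed via directional derivatives in the directions `1, i, j, k` of the `l`-th
coordinate. -/
noncomputable def CF (n : ℕ) (f : (Fin n → ℍ[ℝ]) → ℍ[ℝ]) (q : Fin n → ℍ[ℝ])
    (l : Fin n) : ℍ[ℝ] :=
  fderiv ℝ f q (Pi.single l 1) +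
    qi * fderiv ℝ f q (Pi.single l qi) +
    qj * fderiv ℝ f q (Pi.single l qj) +
    qk * fderiv ℝ f q (Pi.single l qk)

lemma key (G : ℍ[ℝ] →ₗ[ℝ] ℍ[ℝ]) (b : ℍ[ℝ]) :
    G b + qi * G (b * qi) + qj * G (b * qj) + qk * G (b * qk)
      = star b * (G 1 + qi * G qi + qj * G qj + qk * G qk) := by
  have hd : ∀ x : ℍ[ℝ], x = x.re • (1:ℍ[ℝ]) + x.imI • qi + x.imJ • qj + x.imK • qk := by
    intro x; ext <;> simp [Quaternion.re_smul] <;> simp [qi, qj, qk]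
  have hG : ∀ x : ℍ[ℝ], G x = x.re • G 1 + x.imI • G qi + x.imJ • G qj + x.imK • G qk := by
    intro x
    conv_lhs => rw [hd x]
    simp
  rw [hG b, hG (b * qi), hG (b * qj), hG (b * qk)]
  ext <;>
    simp [Quaternion.re_smul] <;> simp [qi, qj, qk, Quaternion.re_mul, Quaternion.imI_mul, Quaternion.imJ_mul,
      Quaternion.imK_mul] <;> ring

/-- Transformation of the Cauchy-Fueter operator under the pull-back
`f̂(q) = f(a q)` by an invertible quaternionic matrix `a ∈ GL(n,ℍ)`:
`∂̄_{q_j} f̂(q) = ∑_k ā_{kj} (∂̄_{Q_k} f)(a q)`; in particular, if `f` is left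
regular on `D` then `f̂` is left regular on `a⁻¹ D`. -/
theorem cauchy_fueter_matrix_pullback (n : ℕ) (D : Set (Fin n → ℍ[ℝ]))
    (hD : IsOpen D) (f : (Fin n → ℍ[ℝ]) → ℍ[ℝ])
    (hf : ∀ p ∈ D, ContDiffAt ℝ 1 f p)
    (a : Matrix (Fin n) (Fin n) ℍ[ℝ]) (ha : IsUnit a) :
    (∀ q : Fin n → ℍ[ℝ], a.mulVec q ∈ D → ∀ j : Fin n,
      CF n (fun p => f (a.mulVec p)) q j =
        ∑ k, star (a k j) * CF n f (a.mulVec q) k) ∧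
    ((∀ p ∈ D, ∀ l : Fin n, CF n f p l = 0) →
      ∀ q : Fin n → ℍ[ℝ], a.mulVec q ∈ D → ∀ j : Fin n,
        CF n (fun p => f (a.mulVec p)) q j = 0) := by
  classical
  let L : (Fin n → ℍ[ℝ]) →ₗ[ℝ] (Fin n → ℍ[ℝ]) :=
    { toFun := a.mulVec
      map_add' := by intro x y; simp [Matrix.mulVec_add]
      map_smul' := by
        intro r x
        refine funext fun k => ?_
        simp [Matrix.mulVec, dotProduct, Finset.smul_sum, mul_smul_comm] }
  let Lc : (Fin n → ℍ[ℝ]) →L[ℝ] (Fin n → ℍ[ℝ]) := L.toContinuousLinearMap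
  have main : ∀ q : Fin n → ℍ[ℝ], a.mulVec q ∈ D → ∀ j : Fin n,
      CF n (fun p => f (a.mulVec p)) q j = ∑ k, star (a k j) * CF n f (a.mulVec q) k := by
    intro q hq j
    have hdf : DifferentiableAt ℝ f (a.mulVec q) := (hf _ hq).differentiableAt one_ne_zero
    have hcomp : fderiv ℝ (fun p => f (a.mulVec p)) q
        = (fderiv ℝ f (a.mulVec q)).comp Lc := by
      have h1 : fderiv ℝ (f ∘ Lc) q = (fderiv ℝ f (Lc q)).comp (fderiv ℝ Lc q) :=
        fderiv_comp q hdf Lc.differentiableAt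
      rw [Lc.fderiv] at h1; exact h1
    set F := fderiv ℝ f (a.mulVec q) with hFdef
    have hsingle : ∀ (c : ℍ[ℝ]), Lc (Pi.single j c) = ∑ k, Pi.single k (a k j * c) := by
      intro c
      rw [Finset.univ_sum_single (fun m => a m j * c)]
      refine funext fun m => ?_
      simp [Lc, L, Matrix.mulVec_single]
    have hF : ∀ c : ℍ[ℝ], F (Lc (Pi.single j c)) = ∑ k, F (Pi.single k (a k j * c)) := by
      intro c; rw [hsingle, map_sum]
    have hCF : CF n (fun p => f (a.mulVec p)) q j
        = ∑ k, (F (Pi.single k (a k j * 1)) + qi * F (Pi.single k (a k j * qi)) +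
            qj * F (Pi.single k (a k j * qj)) + qk * F (Pi.single k (a k j * qk))) := by
      simp only [CF, hcomp, ContinuousLinearMap.comp_apply]
      rw [hF 1, hF qi, hF qj, hF qk]
      simp [Finset.mul_sum, Finset.sum_add_distrib]
    rw [hCF]
    refine Finset.sum_congr rfl fun k _ => ?_
    have hk := key ((F : (Fin n → ℍ[ℝ]) →ₗ[ℝ] ℍ[ℝ]).comp
      (LinearMap.single ℝ (fun _ : Fin n => ℍ[ℝ]) k)) (a k j)
    simpa [CF, LinearMap.single_apply, mul_one] using hk
  refine ⟨main, fun hreg q hq j => ?_⟩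
  rw [main q hq j]
  simp [hreg _ hq]
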